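/- arXiv:0901.4683 — 10 statements merged into one kernel-verified Lean document; each statement's English description precedes it below -/
import Mathlib

section
/- Let p be a positive integer and let α, β be positive irrational real numbers with α < β and 1/α + 1/β = p. Then for every nonnegative integer k, the number of pairs (i,n) with i ∈ {1,2} and n a positive integer such that (i=1 and ⌊nα⌋ = k) or (i=2 and ⌊nβ⌋ = k), counted together with the multiplicities of k among ⌊0·α⌋ (i.e., including n=0 for the α-sequence), equals p. Precisely: for every n ∈ ℕ, ⌊n/α⌋ + ⌊n/β⌋ = np - 1 for n ≥ 1, and consequently each nonnegative integer k occurs exactly p times in total among the sequence (⌊nα⌋)_{n≥0} and the sequence (⌊nβ⌋)_{n≥1}. -/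
lemma ceil_eq_floor_add_one_of_irrational {x : ℝ} (hx : Irrational x) :
    ⌈x⌉ = ⌊x⌋ + 1 := by
  have h1 : (⌊x⌋ : ℝ) < x := lt_of_le_of_ne (Int.floor_le x) (fun h => (hx.ne_int ⌊x⌋ h.symm))
  have h2 : x ≤ (⌊x⌋ : ℝ) + 1 := le_of_lt (Int.lt_floor_add_one x)
  have h3 : ⌈x⌉ ≤ ⌊x⌋ + 1 := by
    apply Int.ceil_le.2
    push_cast
    exact h2
  have h4 : ⌊x⌋ < ⌈x⌉ := by
    have := Int.le_ceil x
    exact_mod_cast h1.trans_le this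
  omega

theorem stmt_0 (p : ℕ) (hp : 1 ≤ p) (α β : ℝ) (hα : 0 < α) (hβ : 0 < β)
    (hαirr : Irrational α) (hβirr : Irrational β) (hlt : α < β)
    (hsum : 1/α + 1/β = p) :
    (∀ n : ℕ, 1 ≤ n → ⌊(n : ℝ)/α⌋ + ⌊(n : ℝ)/β⌋ = n * p - 1) ∧
    (∀ k : ℕ,
      Set.ncard {n : ℕ | ⌊(n : ℝ) * α⌋ = (k : ℤ)} +
      Set.ncard {n : ℕ | 1 ≤ n ∧ ⌊(n : ℝ) * β⌋ = (k : ℤ)} = p) := by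
  have hα' : α ≠ 0 := ne_of_gt hα
  have hβ' : β ≠ 0 := ne_of_gt hβ
  -- irrationality of m/α for m ≥ 1
  have hirrA : ∀ m : ℕ, 1 ≤ m → Irrational ((m : ℝ)/α) := fun m hm =>
    hαirr.natCast_div (by omega)
  -- key floor identity
  have key : ∀ m : ℕ, 1 ≤ m → ⌊(m : ℝ)/α⌋ + ⌊(m : ℝ)/β⌋ = m * p - 1 := by
    intro m hm
    have hx := hirrA m hm
    have hxy : (m : ℝ)/β = ((m * p : ℤ) : ℝ) - (m : ℝ)/α := by
      have h1 : (m : ℝ)/α + (m : ℝ)/β = m * (1/α + 1/β) := by ring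
      rw [hsum] at h1
      push_cast
      linarith
    have hfl : ⌊(m : ℝ)/β⌋ = (m * p : ℤ) - ⌈(m : ℝ)/α⌉ := by
      rw [hxy, sub_eq_add_neg, Int.floor_intCast_add, Int.floor_neg]; ring
    rw [hfl, ceil_eq_floor_add_one_of_irrational hx]
    push_cast
    ring
  constructor
  · intro n hn
    exact key n hn
  · intro k
    -- ceil identity
    have keyc : ∀ m : ℕ, 1 ≤ m → ⌈(m : ℝ)/α⌉ + ⌈(m : ℝ)/β⌉ = m * p + 1 := by
      intro m hm
      have hx := hirrA m hm
      have hy : Irrational ((m : ℝ)/β) := hβirr.natCast_div (by omega)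
      rw [ceil_eq_floor_add_one_of_irrational hx, ceil_eq_floor_add_one_of_irrational hy]
      have := key m hm
      omega
    set a : ℕ := (⌈(k : ℝ)/α⌉).toNat with ha
    set b : ℕ := (⌈((k : ℕ) + 1 : ℝ)/α⌉).toNat with hb
    set c : ℕ := max (⌈(k : ℝ)/β⌉).toNat 1 with hc
    set d : ℕ := (⌈((k : ℕ) + 1 : ℝ)/β⌉).toNat with hd
    have hsetA : {n : ℕ | ⌊(n : ℝ) * α⌋ = (k : ℤ)} = ↑(Finset.Ico a b) := by
      ext n
      simp only [Set.mem_setOf_eq, Finset.coe_Ico, Set.mem_Ico]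
      rw [Int.floor_eq_iff]
      constructor
      · rintro ⟨h1, h2⟩
        push_cast at h1 h2
        constructor
        · rw [ha, Int.toNat_le, Int.ceil_le]
          rw [div_le_iff₀ hα]
          push_cast
          linarith
        · rw [hb, Int.lt_toNat, Int.lt_ceil]
          rw [lt_div_iff₀ hα]
          push_cast at h2 ⊢
          linarith
      · rintro ⟨h1, h2⟩
        rw [ha, Int.toNat_le, Int.ceil_le, div_le_iff₀ hα] at h1
        rw [hb, Int.lt_toNat, Int.lt_ceil, lt_div_iff₀ hα] at h2
        push_cast at h1 h2 ⊢
        exact ⟨by linarith, by linarith⟩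
    have hsetB : {n : ℕ | 1 ≤ n ∧ ⌊(n : ℝ) * β⌋ = (k : ℤ)} = ↑(Finset.Ico c d) := by
      ext n
      simp only [Set.mem_setOf_eq, Finset.coe_Ico, Set.mem_Ico]
      rw [Int.floor_eq_iff]
      constructor
      · rintro ⟨hn1, h1, h2⟩
        push_cast at h1 h2
        refine ⟨?_, ?_⟩
        · rw [hc, max_le_iff]
          refine ⟨?_, hn1⟩
          rw [Int.toNat_le, Int.ceil_le, div_le_iff₀ hβ]
          push_cast
          linarith
        · rw [hd, Int.lt_toNat, Int.lt_ceil, lt_div_iff₀ hβ]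
          push_cast at h2 ⊢
          linarith
      · rintro ⟨h1, h2⟩
        rw [hc, max_le_iff] at h1
        obtain ⟨h1a, h1b⟩ := h1
        rw [Int.toNat_le, Int.ceil_le, div_le_iff₀ hβ] at h1a
        rw [hd, Int.lt_toNat, Int.lt_ceil, lt_div_iff₀ hβ] at h2
        push_cast at h1a h2 ⊢
        exact ⟨h1b, by linarith, by linarith⟩
    rw [hsetA, hsetB, Set.ncard_coe_finset, Set.ncard_coe_finset,
      Nat.card_Ico, Nat.card_Ico]
    -- arithmetic facts
    have hbd : b + d = k * p + p + 1 := by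
      have h1 : ⌈((k:ℕ) + 1 : ℝ)/α⌉ + ⌈((k:ℕ) + 1 : ℝ)/β⌉ = ((k * p + p : ℕ) : ℤ) + 1 := by
        have e1 : ((k:ℕ) + 1 : ℝ) = (((k+1 : ℕ)) : ℝ) := by push_cast; ring
        rw [e1, keyc (k+1) (by omega)]
        push_cast; ring
      have h2 : (0:ℤ) ≤ ⌈((k:ℕ) + 1 : ℝ)/α⌉ := Int.ceil_nonneg (by positivity)
      have h3 : (0:ℤ) ≤ ⌈((k:ℕ) + 1 : ℝ)/β⌉ := Int.ceil_nonneg (by positivity)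
      rw [hb, hd]
      omega
    have hac : a + c = k * p + 1 := by
      rcases Nat.eq_zero_or_pos k with hk | hk
      · subst hk
        simp [ha, hc]
      · have h1 : ⌈(k : ℝ)/α⌉ + ⌈(k : ℝ)/β⌉ = ((k * p : ℕ) : ℤ) + 1 := by
          rw [keyc k hk]; push_cast; ring
        have h2 : (0:ℤ) ≤ ⌈(k : ℝ)/α⌉ := Int.ceil_nonneg (by positivity)
        have hc1 : (1:ℤ) ≤ ⌈(k : ℝ)/β⌉ := by
          rw [Int.le_ceil_iff]
          simp only [Int.cast_one, sub_self]
          positivity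
        rw [ha, hc]
        have : (⌈(k : ℝ)/β⌉).toNat ≥ 1 := by omega
        rw [max_eq_left this]
        omega
    have hab : a ≤ b := by
      rw [ha, hb]
      apply Int.toNat_le_toNat
      apply Int.ceil_le_ceil
      gcongr
      push_cast; linarith
    have hcd : c ≤ d := by
      rw [hc, hd, max_le_iff]
      constructor
      · apply Int.toNat_le_toNat
        apply Int.ceil_le_ceil
        gcongr
        push_cast; linarith
      · have hc1 : (1:ℤ) ≤ ⌈((k:ℕ) + 1 : ℝ)/β⌉ := by
          rw [Int.le_ceil_iff]
          simp only [Int.cast_one, sub_self]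
          positivity
        omega
    omega
end

section
/- Let α, β be positive irrational reals with 1/α + 1/β = p for a positive integer p. Then for every positive integer n, ⌊n/α⌋ + ⌊n/β⌋ = np - 1. -/
theorem stmt_1 (p : ℕ) (hp : 1 ≤ p) (α β : ℝ) (hα : 0 < α) (hβ : 0 < β)
    (hαirr : Irrational α) (hβirr : Irrational β)
    (hsum : 1/α + 1/β = p) :
    ∀ n : ℕ, 1 ≤ n → ⌊(n : ℝ)/α⌋ + ⌊(n : ℝ)/β⌋ = n * p - 1 := by
  intro n hn
  have hn0 : (n : ℝ) ≠ 0 := by positivity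
  have hx : Irrational ((n : ℝ)/α) := by
    have h1 : Irrational α⁻¹ := hαirr.inv
    have := (h1.ratCast_mul (q := (n : ℚ)) (by exact_mod_cast hn0))
    simpa [div_eq_mul_inv] using this
  have hsum2 : (n : ℝ)/α + (n : ℝ)/β = ((n * p : ℤ) : ℝ) := by
    push_cast
    field_simp
    field_simp at hsum
    linear_combination hsum
  have hy : (n : ℝ)/β = ((n * p : ℤ) : ℝ) + (-((n : ℝ)/α)) := by linarith
  have hfy : ⌊(n : ℝ)/β⌋ = (n * p : ℤ) + ⌊-((n : ℝ)/α)⌋ := by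
    rw [hy, Int.floor_intCast_add]
  have hnotint : ∀ m : ℤ, (n : ℝ)/α ≠ m := fun m => hx.ne_int m
  have hneg : ⌊-((n : ℝ)/α)⌋ = -⌊(n : ℝ)/α⌋ - 1 := by
    rw [Int.floor_neg]
    have h1 : (⌊(n : ℝ)/α⌋ : ℝ) < (n : ℝ)/α :=
      lt_of_le_of_ne (Int.floor_le _) (fun h => hnotint _ h.symm)
    have h2 := Int.ceil_le_floor_add_one ((n : ℝ)/α)
    have h3 : ⌊(n : ℝ)/α⌋ < ⌈(n : ℝ)/α⌉ := Int.lt_ceil.2 h1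
    omega
  rw [hfy, hneg]
  ring
end

section
/- Fix positive integers m and p with p ≥ 2, and define a_n = ⌊n·φ_{mp}/p⌋ and b_n = ⌊n·(φ_{mp} + mp)/p⌋ where φ_{mp} = (2 - mp + √((mp)²+4))/2. Then for every nonnegative integer n, either (a_{n+1} - a_n = 0 and b_{n+1} - b_n = m) or (a_{n+1} - a_n = 1 and b_{n+1} - b_n = m + 1). -/
theorem stmt_4 (m p : ℕ) (hm : 1 ≤ m) (hp : 2 ≤ p)
    (φ : ℝ) (hφ : φ = (2 - (m * p : ℝ) + Real.sqrt ((m * p : ℝ)^2 + 4)) / 2)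
    (a b : ℕ → ℤ)
    (ha : ∀ n : ℕ, a n = ⌊(n : ℝ) * φ / p⌋)
    (hb : ∀ n : ℕ, b n = ⌊(n : ℝ) * (φ + m * p) / p⌋) :
    ∀ n : ℕ, (a (n + 1) - a n = 0 ∧ b (n + 1) - b n = m) ∨
      (a (n + 1) - a n = 1 ∧ b (n + 1) - b n = m + 1) := by
  intro n
  set q : ℝ := (m * p : ℝ) with hq
  have hq2 : (2:ℝ) ≤ q := by
    have : (2:ℕ) ≤ m * p := le_trans hp (Nat.le_mul_of_pos_left p hm)
    rw [hq]; exact_mod_cast this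
  have hppos : (0:ℝ) < p := by positivity
  -- √(q²+4) bounds
  have hs1 : q < Real.sqrt (q^2 + 4) := by
    rw [show q = Real.sqrt (q^2) by rw [Real.sqrt_sq (by linarith)]]
    exact Real.sqrt_lt_sqrt (by positivity) (by nlinarith [Real.sq_sqrt (show (0:ℝ) ≤ q^2 by positivity)])
  have hs2 : Real.sqrt (q^2 + 4) < q + 2 := by
    rw [show q + 2 = Real.sqrt ((q+2)^2) by rw [Real.sqrt_sq (by linarith)]]
    exact Real.sqrt_lt_sqrt (by positivity) (by nlinarith)
  have hφ1 : 1 < φ := by rw [hφ]; linarith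
  have hφ2 : φ < 2 := by rw [hφ]; linarith
  have hφp : φ / p < 1 := by
    rw [div_lt_one hppos]
    calc φ < 2 := hφ2
    _ ≤ p := by exact_mod_cast hp
  have hφpos : 0 < φ / p := by positivity
  -- b n = a n + n * m
  have hba : ∀ k : ℕ, b k = a k + k * m := by
    intro k
    rw [hb, ha]
    have : (k : ℝ) * (φ + ↑m * ↑p) / ↑p = (k : ℝ) * φ / p + ((k * m : ℤ) : ℝ) := by
      push_cast
      field_simp
    rw [this, Int.floor_add_intCast]
  -- increments of a
  have key : a (n+1) - a n = 0 ∨ a (n+1) - a n = 1 := by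
    rw [ha, ha]
    have hx : ((n:ℝ)+1) * φ / p = (n:ℝ) * φ / p + φ / p := by ring
    have h1 : ⌊(n : ℝ) * φ / p⌋ ≤ ⌊((n+1 : ℕ) : ℝ) * φ / p⌋ := by
      apply Int.floor_le_floor
      push_cast
      rw [hx]
      linarith
    have h2 : ⌊((n+1 : ℕ) : ℝ) * φ / p⌋ ≤ ⌊(n : ℝ) * φ / p⌋ + 1 := by
      rw [show ⌊(n : ℝ) * φ / p⌋ + 1 = ⌊(n : ℝ) * φ / p + 1⌋ by rw [Int.floor_add_one]]
      apply Int.floor_le_floor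
      push_cast
      rw [hx]
      linarith
    omega
  have hbn : b (n+1) - b n = (a (n+1) - a n) + m := by
    rw [hba, hba]
    push_cast
    ring
  rcases key with h | h
  · left; constructor
    · exact h
    · rw [hbn, h]; ring
  · right; constructor
    · exact h
    · rw [hbn, h]; ring
end

section
/- Fix a positive integer m, and define a_n = ⌊n·φ_m⌋ and b_n = ⌊n·(φ_m + m)⌋ where φ_m = (2 - m + √(m²+4))/2. Then for every nonnegative integer n, either (a_{n+1} - a_n = 1 and b_{n+1} - b_n = m + 1) or (a_{n+1} - a_n = 2 and b_{n+1} - b_n = m + 2). -/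
theorem stmt_5 (m : ℕ) (hm : 1 ≤ m)
    (φ : ℝ) (hφ : φ = (2 - (m : ℝ) + Real.sqrt ((m : ℝ)^2 + 4)) / 2)
    (a b : ℕ → ℤ)
    (ha : ∀ n : ℕ, a n = ⌊(n : ℝ) * φ⌋)
    (hb : ∀ n : ℕ, b n = ⌊(n : ℝ) * (φ + m)⌋) :
    ∀ n : ℕ, (a (n + 1) - a n = 1 ∧ b (n + 1) - b n = m + 1) ∨
      (a (n + 1) - a n = 2 ∧ b (n + 1) - b n = m + 2) := by
  have hm1 : (1 : ℝ) ≤ (m : ℝ) := by exact_mod_cast hm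
  have hs1 : (m : ℝ) ≤ Real.sqrt ((m : ℝ)^2 + 4) := by
    rw [show ((m : ℝ)^2 + 4) = ((m:ℝ))^2 + 4 from rfl]
    nlinarith [Real.sq_sqrt (by positivity : (0:ℝ) ≤ (m : ℝ)^2 + 4),
      Real.sqrt_nonneg ((m : ℝ)^2 + 4)]
  have hs2 : Real.sqrt ((m : ℝ)^2 + 4) < (m : ℝ) + 2 := by
    nlinarith [Real.sq_sqrt (by positivity : (0:ℝ) ≤ (m : ℝ)^2 + 4),
      Real.sqrt_nonneg ((m : ℝ)^2 + 4)]
  have hφ1 : (1 : ℝ) ≤ φ := by rw [hφ]; linarith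
  have hφ2 : φ < 2 := by rw [hφ]; linarith
  -- b n = a n + n * m
  have hba : ∀ n : ℕ, b n = a n + n * m := by
    intro n
    rw [hb, ha]
    have : (n : ℝ) * (φ + m) = (n : ℝ) * φ + ((n * m : ℤ) : ℝ) := by
      push_cast; ring
    rw [this, Int.floor_add_intCast]
  intro n
  have hd1 : 1 ≤ a (n + 1) - a n := by
    rw [ha, ha]
    have h1 : ⌊(n : ℝ) * φ⌋ + 1 = ⌊(n : ℝ) * φ + 1⌋ := (Int.floor_add_one _).symm
    have h2 : ⌊(n : ℝ) * φ + 1⌋ ≤ ⌊((n+1 : ℕ) : ℝ) * φ⌋ := by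
      apply Int.floor_le_floor
      push_cast; nlinarith
    omega
  have hd2 : a (n + 1) - a n ≤ 2 := by
    rw [ha, ha]
    have h1 : (((n+1 : ℕ)) : ℝ) * φ < (n : ℝ) * φ + 2 := by push_cast; nlinarith
    have h2 : (((⌊((n+1 : ℕ) : ℝ) * φ⌋ : ℤ)) : ℝ) ≤ ((n+1 : ℕ) : ℝ) * φ :=
      Int.floor_le _
    have h3 : (n : ℝ) * φ < ⌊(n : ℝ) * φ⌋ + 1 := Int.lt_floor_add_one _
    have : ((⌊((n+1 : ℕ) : ℝ) * φ⌋ : ℤ) : ℝ) < ((⌊(n : ℝ) * φ⌋ : ℤ) : ℝ) + 3 := by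
      linarith
    have h4 : (⌊((n+1 : ℕ) : ℝ) * φ⌋ : ℤ) < ⌊(n : ℝ) * φ⌋ + 3 := by
      exact_mod_cast this
    omega
  have hbd : b (n + 1) - b n = a (n + 1) - a n + m := by
    rw [hba, hba]; push_cast; ring
  rcases (show a (n + 1) - a n = 1 ∨ a (n + 1) - a n = 2 by omega) with h | h
  · exact Or.inl ⟨h, by omega⟩
  · exact Or.inr ⟨h, by omega⟩
end

section
/- Fix positive integers m and p, and define a_n = ⌊n·φ_{mp}/p⌋, b_n = ⌊n·(φ_{mp} + mp)/p⌋, where φ_{mp} = (2 - mp + √((mp)²+4))/2. Then the sequences (a_n)_{n≥0} and (b_n)_{n≥1} are p-complementary on the nonnegative integers: for every integer k ≥ 0, #{n ≥ 0 : a_n = k} + #{n ≥ 1 : b_n = k} = p. -/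
lemma aux_ceil_irr {x : ℝ} (h : Irrational x) : ⌈x⌉ = ⌊x⌋ + 1 := by
  have h1 := Int.ceil_le_floor_add_one x
  have h3 : ⌊x⌋ ≤ ⌈x⌉ := Int.floor_le_ceil x
  have h2 : ⌊x⌋ ≠ ⌈x⌉ := by
    intro he
    have hx : (⌊x⌋ : ℝ) = x :=
      le_antisymm (Int.floor_le x) (by rw [he]; exact Int.le_ceil x)
    exact h.ne_int ⌊x⌋ hx.symm
  omega

lemma aux_count (c1 c2 : ℤ) (h1 : 0 ≤ c1) :
    Set.ncard {n : ℕ | c1 ≤ (n : ℤ) ∧ (n : ℤ) < c2} = (c2 - c1).toNat := by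
  have hset : {n : ℕ | c1 ≤ (n : ℤ) ∧ (n : ℤ) < c2} = ↑(Finset.Ico c1.toNat c2.toNat) := by
    ext n
    simp only [Finset.coe_Ico, Set.mem_Ico, Set.mem_setOf_eq]
    omega
  rw [hset, Set.ncard_coe_finset, Nat.card_Ico]
  omega

set_option maxHeartbeats 2000000 in
theorem stmt_6 (m p : ℕ) (hm : 1 ≤ m) (hp : 1 ≤ p)
    (φ : ℝ) (hφ : φ = (2 - (m * p : ℝ) + Real.sqrt ((m * p : ℝ)^2 + 4)) / 2)
    (a b : ℕ → ℤ)
    (ha : ∀ n : ℕ, a n = ⌊(n : ℝ) * φ / p⌋)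
    (hb : ∀ n : ℕ, b n = ⌊(n : ℝ) * (φ + m * p) / p⌋) :
    ∀ k : ℕ,
      Set.ncard {n : ℕ | a n = (k : ℤ)} +
      Set.ncard {n : ℕ | 1 ≤ n ∧ b n = (k : ℤ)} = p := by
  intro k
  set q : ℕ := m * p with hqdef
  have hq1 : 1 ≤ q := Nat.one_le_iff_ne_zero.mpr (by positivity)
  set s : ℝ := Real.sqrt ((m * p : ℝ)^2 + 4) with hsdef
  have hs0 : 0 ≤ s := Real.sqrt_nonneg _
  have hs2 : s ^ 2 = (q : ℝ)^2 + 4 := by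
    rw [hsdef, Real.sq_sqrt (by positivity)]
    push_cast [hqdef]; ring
  have hnotsq : ¬ IsSquare (q ^ 2 + 4) := by
    rintro ⟨r, hr⟩
    have h1 : q < r := by nlinarith
    have h2 : r < q + 2 := by nlinarith
    have h3 : r = q + 1 := by omega
    subst h3
    have h4 : 2 * q = 3 := by nlinarith
    omega
  have hs_irr : Irrational s := by
    have h := irrational_sqrt_natCast_iff.mpr hnotsq
    have hcast : ((q ^ 2 + 4 : ℕ) : ℝ) = ((m * p : ℝ))^2 + 4 := by
      push_cast [hqdef]; ring
    rwa [hcast] at h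
  have hφeq : φ = (2 - (q : ℝ) + s) / 2 := by rw [hφ]; push_cast [hqdef]; ring
  have hφ_irr : Irrational φ := by
    have h1 : φ = (((2 - (q : ℚ)) / 2 : ℚ) : ℝ) + ((1 / 2 : ℚ) : ℝ) * s := by
      rw [hφeq]; push_cast; ring
    rw [h1]
    exact Irrational.ratCast_add _ (Irrational.ratCast_mul hs_irr (by norm_num))
  have hsq : (q : ℝ) < s := by nlinarith
  have hφ_pos : 0 < φ := by rw [hφeq]; linarith
  set β : ℝ := φ + (m : ℝ) * p with hβdef
  have hβq : β = φ + (q : ℝ) := by rw [hβdef]; push_cast [hqdef]; ring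
  have hβ_pos : 0 < β := by rw [hβq]; positivity
  have hmul : φ * β = φ + β := by
    rw [hβq, hφeq]
    nlinarith [hs2]
  have hp' : (0 : ℝ) < p := by positivity
  -- irrationality of N / φ
  have hirr_div : ∀ N : ℕ, 1 ≤ N → Irrational ((N : ℝ) / φ) := by
    intro N hN hmem
    obtain ⟨r, hr⟩ := hmem
    apply hφ_irr
    have hN' : (0 : ℝ) < N := by exact_mod_cast hN
    have hx_pos : (0 : ℝ) < (N : ℝ) / φ := by positivity
    have hr0 : (r : ℝ) ≠ 0 := by rw [hr]; exact ne_of_gt hx_pos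
    refine ⟨(N : ℚ) / r, ?_⟩
    push_cast
    rw [div_eq_iff hr0]
    rw [eq_comm, div_eq_iff (ne_of_gt hφ_pos)] at hr
    linarith [hr]
  -- ceil sum
  have hceilsum : ∀ N : ℕ, 1 ≤ N → ⌈(N : ℝ) / φ⌉ + ⌈(N : ℝ) / β⌉ = (N : ℤ) + 1 := by
    intro N hN
    have hsum : (N : ℝ) / φ + (N : ℝ) / β = N := by
      field_simp
      nlinarith [hmul]
    have hy : (N : ℝ) / β = -((N : ℝ) / φ) + ((N : ℤ) : ℝ) := by push_cast; linarith
    rw [hy, Int.ceil_add_intCast, Int.ceil_neg, aux_ceil_irr (hirr_div N hN)]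
    ring
  -- interval characterization of the floor equation
  have key : ∀ (γ : ℝ), 0 < γ → ∀ n : ℕ,
      (⌊(n : ℝ) * γ / p⌋ = (k : ℤ) ↔
        ⌈((k * p : ℕ) : ℝ) / γ⌉ ≤ (n : ℤ) ∧ (n : ℤ) < ⌈(((k + 1) * p : ℕ) : ℝ) / γ⌉) := by
    intro γ hγ n
    rw [Int.floor_eq_iff, Int.ceil_le, Int.lt_ceil]
    constructor
    · rintro ⟨h1, h2⟩
      constructor
      · rw [div_le_iff₀ hγ]
        rw [le_div_iff₀ hp'] at h1
        push_cast at h1 ⊢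
        linarith
      · rw [lt_div_iff₀ hγ]
        rw [div_lt_iff₀ hp'] at h2
        push_cast at h2 ⊢
        linarith
    · rintro ⟨h1, h2⟩
      constructor
      · rw [le_div_iff₀ hp']
        rw [div_le_iff₀ hγ] at h1
        push_cast at h1 ⊢
        linarith
      · rw [div_lt_iff₀ hp']
        rw [lt_div_iff₀ hγ] at h2
        push_cast at h2 ⊢
        linarith
  set N1 : ℕ := k * p with hN1
  set N2 : ℕ := (k + 1) * p with hN2
  set c1 : ℤ := ⌈(N1 : ℝ) / φ⌉ with hc1
  set c2 : ℤ := ⌈(N2 : ℝ) / φ⌉ with hc2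
  set d1 : ℤ := ⌈(N1 : ℝ) / β⌉ with hd1
  set d2 : ℤ := ⌈(N2 : ℝ) / β⌉ with hd2
  have hA : {n : ℕ | a n = (k : ℤ)} = {n : ℕ | c1 ≤ (n : ℤ) ∧ (n : ℤ) < c2} := by
    ext n
    simp only [Set.mem_setOf_eq, ha n]
    exact key φ hφ_pos n
  have hB : {n : ℕ | 1 ≤ n ∧ b n = (k : ℤ)} =
      {n : ℕ | max 1 d1 ≤ (n : ℤ) ∧ (n : ℤ) < d2} := by
    ext n
    simp only [Set.mem_setOf_eq, hb n]
    rw [key β hβ_pos n]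
    omega
  have hc1nn : 0 ≤ c1 := Int.ceil_nonneg (div_nonneg (Nat.cast_nonneg N1) hφ_pos.le)
  have hd1nn : 0 ≤ d1 := Int.ceil_nonneg (div_nonneg (Nat.cast_nonneg N1) hβ_pos.le)
  have hle : c1 ≤ c2 ∧ d1 ≤ d2 := by
    have hNle : (N1 : ℝ) ≤ N2 := by
      have : N1 ≤ N2 := by rw [hN1, hN2]; nlinarith
      exact_mod_cast this
    exact ⟨Int.ceil_le_ceil (by gcongr), Int.ceil_le_ceil (by gcongr)⟩
  have hN2pos : 1 ≤ N2 := by rw [hN2]; nlinarith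
  have hN21 : N2 = N1 + p := by rw [hN1, hN2]; ring
  have hN2' : (0 : ℝ) < N2 := by exact_mod_cast hN2pos
  have hc2pos : 1 ≤ c2 := Int.ceil_pos.mpr (div_pos hN2' hφ_pos)
  have hd2pos : 1 ≤ d2 := Int.ceil_pos.mpr (div_pos hN2' hβ_pos)
  have hsum2 : c2 + d2 = (N2 : ℤ) + 1 := hceilsum N2 hN2pos
  rw [hA, hB, aux_count c1 c2 hc1nn, aux_count (max 1 d1) d2 (by omega)]
  rcases Nat.eq_zero_or_pos k with hk | hk
  · have hN10 : N1 = 0 := by rw [hN1, hk]; ring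
    have hc10 : c1 = 0 := by rw [hc1, hN10]; simp
    have hd10 : d1 = 0 := by rw [hd1, hN10]; simp
    omega
  · have hN1pos : 1 ≤ N1 := by rw [hN1]; nlinarith
    have hsum1 : c1 + d1 = (N1 : ℤ) + 1 := hceilsum N1 hN1pos
    have hN1' : (0 : ℝ) < N1 := by exact_mod_cast hN1pos
    have hd1pos : 1 ≤ d1 := Int.ceil_pos.mpr (div_pos hN1' hβ_pos)
    omega
end

section
/- Fix positive integers m and p. Suppose (x_n)_{n≥0} and (y_n)_{n≥0} are non-decreasing sequences of nonnegative integers such that (x_n)_{n≥0} and (y_n)_{n≥1} are p-complementary (every nonnegative integer occurs exactly p times in total among them) and y_n - x_n = m·n for all n. Then x_n = ⌊n·φ_{mp}/p⌋ and y_n = ⌊n·(φ_{mp} + mp)/p⌋ for all n, where φ_{mp} = (2 - mp + √((mp)²+4))/2. In particular such a pair of sequences is unique. -/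
lemma aux_ncard_Iio (k : ℕ) : (Set.Iio k).ncard = k := by
  have : (Set.Iio k : Set ℕ) = ↑(Finset.range k) := by
    ext n; simp
  rw [this, Set.ncard_coe_finset, Finset.card_range]

lemma aux_mem_iff {S : Set ℕ} (hfin : S.Finite)
    (hdc : ∀ a b : ℕ, a ≤ b → b ∈ S → a ∈ S) :
    ∀ n, n ∈ S ↔ n < S.ncard := by
  intro n
  constructor
  · intro hn
    have hsub : Set.Iio (n+1) ⊆ S := fun a ha => hdc a n (Nat.lt_succ_iff.mp ha) hn
    have := Set.ncard_le_ncard hsub hfin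
    rw [aux_ncard_Iio] at this; omega
  · intro hn
    by_contra hns
    have hsub : S ⊆ Set.Iio n := by
      intro a ha
      rcases lt_or_ge a n with h | h
      · exact Set.mem_Iio.mpr h
      · exact absurd (hdc n a h ha) hns
    have := Set.ncard_le_ncard hsub (Set.finite_Iio n)
    rw [aux_ncard_Iio] at this; omega

lemma aux_notsq (a : ℕ) (ha : 1 ≤ a) : ¬ IsSquare (a^2 + 4) := by
  rintro ⟨d, hd⟩
  have h1 : a < d := by nlinarith
  have h2 : d < a + 2 := by nlinarith
  have h3 : d = a + 1 := by omega
  subst h3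
  have h4 : a^2 + 4 = a^2 + 2*a + 1 := by rw [hd]; ring
  have h5 : 2*a = 3 := by nlinarith [h4]
  omega



lemma aux_beatty (m p : ℕ) (φ : ℝ) (hm : 1 ≤ m) (hp : 1 ≤ p)
    (hφpos : 0 < φ) (hψpos : 0 < φ + (m:ℝ)*p)
    (hkey : φ * (φ + (m:ℝ)*p) = 2*φ + (m:ℝ)*p)
    (hirr_φ : Irrational φ) (hirr_ψ : Irrational (φ + (m:ℝ)*p)) :
    (∀ t n : ℕ, (⌊(n:ℝ)*φ/p⌋ ≤ (t:ℤ) ↔ n < {n : ℕ | ⌊(n:ℝ)*φ/p⌋ ≤ (t:ℤ)}.ncard)) ∧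
    (∀ t : ℕ, {n : ℕ | ⌊(n:ℝ)*φ/p⌋ ≤ (t:ℤ)}.ncard
      + {n : ℕ | 1 ≤ n ∧ ⌊(n:ℝ)*φ/p⌋ + (m:ℤ)*n ≤ (t:ℤ)}.ncard = p*(t+1)) := by
  have hp0 : (0:ℝ) < p := by exact_mod_cast hp
  have main : ∀ t : ℕ, ∃ K K' : ℕ,
      (∀ n : ℕ, (⌊(n:ℝ)*φ/p⌋ ≤ (t:ℤ) ↔ n < K)) ∧
      (∀ n : ℕ, ((1 ≤ n ∧ ⌊(n:ℝ)*φ/p⌋ + (m:ℤ)*n ≤ (t:ℤ)) ↔ (1 ≤ n ∧ n < K'))) ∧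
      1 ≤ K' ∧ K + K' = p*(t+1) + 1 := by
    intro t
    have hs1 : 1 ≤ p*(t+1) := Nat.mul_pos hp (Nat.succ_pos t)
    have hs0 : (0:ℝ) < ((p*(t+1) : ℕ) : ℝ) := by exact_mod_cast hs1
    set c : ℝ := ((p*(t+1) : ℕ) : ℝ)/φ with hc
    set c' : ℝ := ((p*(t+1) : ℕ) : ℝ)/(φ + (m:ℝ)*p) with hc'
    have hcpos : 0 < c := by positivity
    have hc'pos : 0 < c' := by positivity
    have hcc' : c + c' = ((p*(t+1) : ℕ) : ℝ) := by
      have hstep : c + c' = ((p*(t+1) : ℕ) : ℝ) * (2*φ + (m:ℝ)*p) / (φ * (φ + (m:ℝ)*p)) := by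
        rw [hc, hc']; field_simp; ring
      rw [hstep, hkey, mul_div_assoc, div_self (by linarith : 2*φ + (m:ℝ)*p ≠ 0), mul_one]
    have hcirr : Irrational c := hirr_φ.natCast_div (by omega)
    have hc'irr : Irrational c' := hirr_ψ.natCast_div (by omega)
    refine ⟨⌈c⌉₊, ⌈c'⌉₊, ?_, ?_, Nat.ceil_pos.mpr hc'pos, ?_⟩
    · intro n
      rw [← Int.lt_add_one_iff, Int.floor_lt]
      rw [Nat.lt_ceil, hc, lt_div_iff₀ hφpos]
      constructor
      · intro h
        have := (div_lt_iff₀ hp0).mp h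
        push_cast at this ⊢
        nlinarith
      · intro h
        rw [div_lt_iff₀ hp0]
        push_cast at h ⊢
        nlinarith
    · intro n
      have hfl : ⌊(n:ℝ)*φ/p⌋ + (m:ℤ)*n = ⌊(n:ℝ)*(φ + (m:ℝ)*p)/p⌋ := by
        rw [show (n:ℝ)*(φ + (m:ℝ)*p)/p = (n:ℝ)*φ/p + (((m:ℤ)*n : ℤ) : ℝ) by
          push_cast; field_simp]
        rw [Int.floor_add_intCast]
      rw [hfl]
      refine and_congr_right fun _ => ?_
      rw [← Int.lt_add_one_iff, Int.floor_lt]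
      rw [Nat.lt_ceil, hc', lt_div_iff₀ hψpos]
      constructor
      · intro h
        have := (div_lt_iff₀ hp0).mp h
        push_cast at this ⊢
        nlinarith
      · intro h
        rw [div_lt_iff₀ hp0]
        push_cast at h ⊢
        nlinarith
    · have h1 : c < (⌈c⌉₊ : ℝ) := by
        refine lt_of_le_of_ne (Nat.le_ceil c) ?_
        have := hcirr.ne_int (⌈c⌉₊ : ℤ)
        push_cast at this; exact this
      have h2 : (⌈c⌉₊ : ℝ) < c + 1 := Nat.ceil_lt_add_one hcpos.le
      have h1' : c' < (⌈c'⌉₊ : ℝ) := by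
        refine lt_of_le_of_ne (Nat.le_ceil c') ?_
        have := hc'irr.ne_int (⌈c'⌉₊ : ℤ)
        push_cast at this; exact this
      have h2' : (⌈c'⌉₊ : ℝ) < c' + 1 := Nat.ceil_lt_add_one hc'pos.le
      have hlt1 : ((p*(t+1) : ℕ) : ℝ) < ((⌈c⌉₊ + ⌈c'⌉₊ : ℕ) : ℝ) := by
        push_cast at hcc' ⊢; linarith
      have hlt2 : ((⌈c⌉₊ + ⌈c'⌉₊ : ℕ) : ℝ) < ((p*(t+1) : ℕ) : ℝ) + 2 := by
        push_cast at hcc' ⊢; linarith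
      have l1 : p*(t+1) < ⌈c⌉₊ + ⌈c'⌉₊ := by exact_mod_cast hlt1
      have l2 : ⌈c⌉₊ + ⌈c'⌉₊ < p*(t+1) + 2 := by exact_mod_cast hlt2
      omega
  constructor
  · intro t n
    obtain ⟨K, K', hK, hK', hK'1, hsum⟩ := main t
    have hset : {n : ℕ | ⌊(n:ℝ)*φ/p⌋ ≤ (t:ℤ)} = Set.Iio K := by
      ext a; simpa using hK a
    rw [hset, aux_ncard_Iio]
    exact hK n
  · intro t
    obtain ⟨K, K', hK, hK', hK'1, hsum⟩ := main t
    have hset : {n : ℕ | ⌊(n:ℝ)*φ/p⌋ ≤ (t:ℤ)} = Set.Iio K := by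
      ext a; simpa using hK a
    have hset' : {n : ℕ | 1 ≤ n ∧ ⌊(n:ℝ)*φ/p⌋ + (m:ℤ)*n ≤ (t:ℤ)}
        = ↑(Finset.Ico 1 K') := by
      ext a
      simp only [Set.mem_setOf_eq, Finset.coe_Ico, Set.mem_Ico]
      exact hK' a
    rw [hset, aux_ncard_Iio, hset', Set.ncard_coe_finset, Nat.card_Ico]
    omega


lemma aux_unbounded (m p : ℕ) (hm : 1 ≤ m) (hp : 1 ≤ p)
    (x y : ℕ → ℤ)
    (hx0 : ∀ n : ℕ, 0 ≤ x n)
    (hxmono : Monotone x)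
    (hcomp : ∀ k : ℕ,
      Set.ncard {n : ℕ | x n = (k : ℤ)} +
      Set.ncard {n : ℕ | 1 ≤ n ∧ y n = (k : ℤ)} = p)
    (hdiff : ∀ n : ℕ, y n - x n = m * n) :
    ∀ t : ℤ, ∃ N : ℕ, t < x N := by
  have hyx : ∀ n : ℕ, y n = x n + (m:ℤ)*n := fun n => by have := hdiff n; linarith
  by_contra hcon
  push_neg at hcon
  obtain ⟨t, ht⟩ := hcon
  obtain ⟨k0, ⟨n0, hn0⟩, hub⟩ := Int.exists_greatest_of_bdd
    (P := fun z => ∃ n : ℕ, x n = z) ⟨t, fun z ⟨n, hn⟩ => hn ▸ ht n⟩ ⟨x 0, 0, rfl⟩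
  have hk0nn : 0 ≤ k0 := (hx0 n0).trans hn0.le
  have hex : ∃ n, x n = k0 := ⟨n0, hn0⟩
  set N0 := Nat.find hex with hN0def
  have hN0 : x N0 = k0 := Nat.find_spec hex
  set κ := k0.toNat with hκdef
  have hκ : (κ:ℤ) = k0 := Int.toNat_of_nonneg hk0nn
  have hxle : ∀ n, x n ≤ (κ:ℤ) := fun n => hκ ▸ hub _ ⟨n, rfl⟩
  have hge : ∀ n, N0 ≤ n → x n = (κ:ℤ) := fun n h =>
    hκ ▸ le_antisymm (hκ ▸ hxle n) (hN0 ▸ hxmono h)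
  have hinf : {n : ℕ | x n = (κ:ℤ)}.Infinite := by
    apply Set.Infinite.mono (s := Set.Ici N0) ?_ (Set.Ici_infinite N0)
    intro n hn
    exact hge n hn
  have hzero : {n : ℕ | x n = (κ:ℤ)}.ncard = 0 := hinf.ncard
  have hm0 : (m:ℤ) ≠ 0 := by exact_mod_cast (by omega : m ≠ 0)
  have hmM : ∀ n : ℕ, (n:ℤ) < (N0:ℤ)+1 → (m:ℤ)*(n:ℤ) < (m:ℤ)*((N0:ℤ)+1) := by
    intro n hn
    apply mul_lt_mul_of_pos_left hn (by exact_mod_cast hm)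
  have hone : (1:ℤ) ≤ (m:ℤ)*((N0:ℤ)+1) := by
    have : (1:ℕ) ≤ m*(N0+1) := Nat.mul_pos (by omega) (by omega)
    exact_mod_cast this
  -- p = 1
  have hp1 : p = 1 := by
    have hxK : {n : ℕ | x n = ((κ + m*(N0+1) : ℕ) : ℤ)} = ∅ := by
      ext n
      simp only [Set.mem_setOf_eq, Set.mem_empty_iff_false, iff_false]
      intro h
      have h1 := hxle n
      rw [h] at h1
      push_cast at h1
      omega
    have hyK : {n : ℕ | 1 ≤ n ∧ y n = ((κ + m*(N0+1) : ℕ) : ℤ)} = {N0 + 1} := by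
      ext n
      simp only [Set.mem_setOf_eq, Set.mem_singleton_iff]
      constructor
      · rintro ⟨h1, h2⟩
        rw [hyx] at h2
        rcases le_or_gt N0 n with hc | hc
        · rw [hge n hc] at h2
          push_cast at h2
          have heq : (m:ℤ)*(n:ℤ) = (m:ℤ)*((N0:ℤ)+1) := by omega
          have := mul_left_cancel₀ hm0 heq
          omega
        · have hlt := hmM n (by exact_mod_cast (by omega : (n:ℤ) < (N0:ℤ)+1))
          have h3 := hxle n
          push_cast at h2
          omega
      · rintro rfl
        refine ⟨by omega, ?_⟩
        rw [hyx, hge (N0+1) (by omega)]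
        push_cast
        ring
    have hc := hcomp (κ + m*(N0+1))
    rw [hxK, hyK] at hc
    simpa using hc.symm
  -- m = 1
  have hm1 : m = 1 := by
    by_contra hm2'
    have hm2 : (2:ℤ) ≤ (m:ℤ) := by exact_mod_cast (by omega : 2 ≤ m)
    have hxK : {n : ℕ | x n = ((κ + m*(N0+1) + 1 : ℕ) : ℤ)} = ∅ := by
      ext n
      simp only [Set.mem_setOf_eq, Set.mem_empty_iff_false, iff_false]
      intro h
      have h1 := hxle n
      rw [h] at h1
      push_cast at h1
      omega
    have hyK : {n : ℕ | 1 ≤ n ∧ y n = ((κ + m*(N0+1) + 1 : ℕ) : ℤ)} = ∅ := by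
      ext n
      simp only [Set.mem_setOf_eq, Set.mem_empty_iff_false, iff_false]
      rintro ⟨h1, h2⟩
      rw [hyx] at h2
      rcases le_or_gt N0 n with hc | hc
      · rw [hge n hc] at h2
        push_cast at h2
        rcases le_or_gt (n:ℤ) ((N0:ℤ)+1) with hd | hd
        · have : (m:ℤ)*(n:ℤ) ≤ (m:ℤ)*((N0:ℤ)+1) :=
            mul_le_mul_of_nonneg_left hd (by positivity)
          omega
        · have h5 : (m:ℤ)*((N0:ℤ)+1+1) ≤ (m:ℤ)*(n:ℤ) :=
            mul_le_mul_of_nonneg_left (by omega) (by positivity)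
          nlinarith
      · have hlt := hmM n (by exact_mod_cast (by omega : (n:ℤ) < (N0:ℤ)+1))
        have h3 := hxle n
        push_cast at h2
        omega
    have hc := hcomp (κ + m*(N0+1) + 1)
    rw [hxK, hyK] at hc
    simp at hc
    omega
  subst hm1
  subst hp1
  rcases Nat.eq_zero_or_pos N0 with hN00 | hN0pos
  · have hyκ : {n : ℕ | 1 ≤ n ∧ y n = (κ:ℤ)} = ∅ := by
      ext n
      simp only [Set.mem_setOf_eq, Set.mem_empty_iff_false, iff_false]
      rintro ⟨h1, h2⟩
      rw [hyx, hge n (by omega)] at h2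
      push_cast at h2
      omega
    have hc := hcomp κ
    rw [hzero, hyκ] at hc
    simp at hc
  · have hcov : ∀ j : ℕ, j < N0 → ∃ n : ℕ, 1 ≤ n ∧ n < N0 ∧ y n = ((κ + j : ℕ) : ℤ) := by
      intro j hj
      have hxj : {n : ℕ | x n = ((κ + j : ℕ) : ℤ)}.ncard = 0 := by
        rcases Nat.eq_zero_or_pos j with rfl | hjpos
        · simpa using hzero
        · have he : {n : ℕ | x n = ((κ + j : ℕ) : ℤ)} = ∅ := by
            ext n
            simp only [Set.mem_setOf_eq, Set.mem_empty_iff_false, iff_false]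
            intro h
            have h1 := hxle n
            rw [h] at h1
            push_cast at h1
            omega
          rw [he, Set.ncard_empty]
      have hc := hcomp (κ + j)
      rw [hxj] at hc
      obtain ⟨n, hn1, hn2⟩ :=
        Set.nonempty_of_ncard_ne_zero (s := {n : ℕ | 1 ≤ n ∧ y n = ((κ + j : ℕ) : ℤ)})
          (by omega)
      refine ⟨n, hn1, ?_, hn2⟩
      by_contra hge'
      push_neg at hge'
      rw [hyx, hge n hge'] at hn2
      push_cast at hn2
      omega
    choose f hf1 hf2 hf3 using hcov
    set g : ℕ → ℕ := fun j => if h : j < N0 then f j h else 0 with hgdef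
    have hg : ∀ (j : ℕ) (h : j < N0), g j = f j h := fun j h => dif_pos h
    have hinj := Finset.card_le_card_of_injOn
        (s := Finset.range N0) (t := Finset.Ico 1 N0) g
        (by
          intro j hj
          simp only [Finset.mem_coe, Finset.mem_range] at hj
          rw [hg j hj]
          exact Finset.mem_Ico.mpr ⟨hf1 j hj, hf2 j hj⟩)
        (by
          intro j1 hj1 j2 hj2 heq
          simp only [Finset.coe_range, Set.mem_Iio] at hj1 hj2
          rw [hg j1 hj1, hg j2 hj2] at heq
          have e1 := hf3 j1 hj1
          have e2 := hf3 j2 hj2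
          rw [heq, e2] at e1
          have : (κ:ℤ) + j2 = (κ:ℤ) + j1 := by push_cast at e1; omega
          omega)
    rw [Finset.card_range, Nat.card_Ico] at hinj
    omega


lemma aux_star (m p : ℕ) (hm : 1 ≤ m) (hp : 1 ≤ p)
    (x y : ℕ → ℤ)
    (hx0 : ∀ n : ℕ, 0 ≤ x n)
    (hxmono : Monotone x)
    (hcomp : ∀ k : ℕ,
      Set.ncard {n : ℕ | x n = (k : ℤ)} +
      Set.ncard {n : ℕ | 1 ≤ n ∧ y n = (k : ℤ)} = p)
    (hdiff : ∀ n : ℕ, y n - x n = m * n)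
    (hub : ∀ t : ℤ, ∃ N : ℕ, t < x N) :
    ∀ t : ℕ, {n : ℕ | x n ≤ (t:ℤ)}.ncard
      + {n : ℕ | 1 ≤ n ∧ x n + (m:ℤ)*n ≤ (t:ℤ)}.ncard = p*(t+1) := by
  have hyx : ∀ n : ℕ, y n = x n + (m:ℤ)*n := fun n => by have := hdiff n; linarith
  have hmn : ∀ n : ℕ, (n:ℤ) ≤ (m:ℤ)*n := fun n =>
    le_mul_of_one_le_left (by positivity) (by exact_mod_cast hm)
  intro t
  obtain ⟨N1, hN1⟩ := hub (t:ℤ)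
  have hNbig : ∀ n : ℕ, x n ≤ (t:ℤ) → n < N1 + t + 1 := by
    intro n hn
    rcases lt_or_ge n N1 with h | h
    · omega
    · have := hxmono h
      omega
  -- set/finset identifications
  have e1 : {n : ℕ | x n ≤ (t:ℤ)} = ↑((Finset.range (N1+t+1)).filter fun n => x n ≤ (t:ℤ)) := by
    ext n
    simp only [Set.mem_setOf_eq, Finset.mem_coe, Finset.mem_filter, Finset.mem_range]
    exact ⟨fun h => ⟨hNbig n h, h⟩, fun h => h.2⟩
  have e2 : {n : ℕ | 1 ≤ n ∧ x n + (m:ℤ)*n ≤ (t:ℤ)}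
      = ↑((Finset.range (N1+t+1)).filter fun n => 1 ≤ n ∧ x n + (m:ℤ)*n ≤ (t:ℤ)) := by
    ext n
    simp only [Set.mem_setOf_eq, Finset.mem_coe, Finset.mem_filter, Finset.mem_range]
    refine ⟨fun h => ⟨?_, h⟩, fun h => h.2⟩
    have h1 := hx0 n
    have h2 := hmn n
    have h3 := h.2
    omega
  have e3 : ∀ k : ℕ, k ≤ t → {n : ℕ | x n = (k:ℤ)}
      = ↑((Finset.range (N1+t+1)).filter fun n => x n = (k:ℤ)) := by
    intro k hk
    ext n
    simp only [Set.mem_setOf_eq, Finset.mem_coe, Finset.mem_filter, Finset.mem_range]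
    refine ⟨fun h => ⟨hNbig n (by omega), h⟩, fun h => h.2⟩
  have e4 : ∀ k : ℕ, k ≤ t → {n : ℕ | 1 ≤ n ∧ y n = (k:ℤ)}
      = ↑((Finset.range (N1+t+1)).filter fun n => 1 ≤ n ∧ x n + (m:ℤ)*n = (k:ℤ)) := by
    intro k hk
    ext n
    simp only [Set.mem_setOf_eq, Finset.mem_coe, Finset.mem_filter, Finset.mem_range, hyx]
    refine ⟨fun h => ⟨?_, h⟩, fun h => h.2⟩
    have h1 := hx0 n
    have h2 := hmn n
    have h3 := h.2
    omega
  have hcompF : ∀ k ∈ Finset.range (t+1),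
      ((Finset.range (N1+t+1)).filter fun n => x n = ((k:ℕ):ℤ)).card
      + ((Finset.range (N1+t+1)).filter fun n => 1 ≤ n ∧ x n + (m:ℤ)*n = ((k:ℕ):ℤ)).card = p := by
    intro k hk
    simp only [Finset.mem_range] at hk
    have := hcomp k
    rw [e3 k (by omega), e4 k (by omega), Set.ncard_coe_finset, Set.ncard_coe_finset] at this
    exact this
  have S1 : ((Finset.range (N1+t+1)).filter fun n => x n ≤ (t:ℤ)).card
      = ∑ k ∈ Finset.range (t+1), ((Finset.range (N1+t+1)).filter fun n => x n = ((k:ℕ):ℤ)).card := by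
    rw [Finset.card_eq_sum_card_fiberwise
      (f := fun n => (x n).toNat) (t := Finset.range (t+1))
      (by
        intro n hn
        simp only [Finset.mem_coe, Finset.mem_filter] at hn
        simp only [Finset.mem_coe, Finset.mem_range]
        have := hx0 n
        omega)]
    apply Finset.sum_congr rfl
    intro k hk
    simp only [Finset.mem_range] at hk
    rw [Finset.filter_filter]
    refine congrArg Finset.card ?_
    apply Finset.filter_congr
    intro n _
    have := hx0 n
    constructor
    · rintro ⟨h1, h2⟩; omega
    · intro h; constructor <;> omega
  have S2 : ((Finset.range (N1+t+1)).filter fun n => 1 ≤ n ∧ x n + (m:ℤ)*n ≤ (t:ℤ)).card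
      = ∑ k ∈ Finset.range (t+1),
        ((Finset.range (N1+t+1)).filter fun n => 1 ≤ n ∧ x n + (m:ℤ)*n = ((k:ℕ):ℤ)).card := by
    rw [Finset.card_eq_sum_card_fiberwise
      (f := fun n => (x n + (m:ℤ)*n).toNat) (t := Finset.range (t+1))
      (by
        intro n hn
        simp only [Finset.mem_coe, Finset.mem_filter] at hn
        simp only [Finset.mem_coe, Finset.mem_range]
        have h1 := hx0 n
        have h2 : (0:ℤ) ≤ (m:ℤ)*n := by positivity
        have h3 := hn.2.2
        omega)]
    apply Finset.sum_congr rfl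
    intro k hk
    simp only [Finset.mem_range] at hk
    rw [Finset.filter_filter]
    refine congrArg Finset.card ?_
    apply Finset.filter_congr
    intro n _
    have h1 := hx0 n
    have h2 : (0:ℤ) ≤ (m:ℤ)*n := by positivity
    constructor
    · rintro ⟨⟨ha, hb⟩, h3⟩; refine ⟨ha, by omega⟩
    · rintro ⟨ha, hb⟩; exact ⟨⟨ha, by omega⟩, by omega⟩
  rw [e1, e2, Set.ncard_coe_finset, Set.ncard_coe_finset, S1, S2,
    ← Finset.sum_add_distrib, Finset.sum_congr rfl hcompF]
  simp [Finset.sum_const, Finset.card_range, Nat.mul_comm]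


theorem stmt_7 (m p : ℕ) (hm : 1 ≤ m) (hp : 1 ≤ p)
    (φ : ℝ) (hφ : φ = (2 - (m * p : ℝ) + Real.sqrt ((m * p : ℝ)^2 + 4)) / 2)
    (x y : ℕ → ℤ)
    (hx0 : ∀ n : ℕ, 0 ≤ x n) (hy0 : ∀ n : ℕ, 0 ≤ y n)
    (hxmono : Monotone x) (hymono : Monotone y)
    (hcomp : ∀ k : ℕ,
      Set.ncard {n : ℕ | x n = (k : ℤ)} +
      Set.ncard {n : ℕ | 1 ≤ n ∧ y n = (k : ℤ)} = p)
    (hdiff : ∀ n : ℕ, y n - x n = m * n) :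
    ∀ n : ℕ, x n = ⌊(n : ℝ) * φ / p⌋ ∧ y n = ⌊(n : ℝ) * (φ + m * p) / p⌋ := by
  have hp0 : (0:ℝ) < p := by exact_mod_cast hp
  have hyx : ∀ n : ℕ, y n = x n + (m:ℤ)*n := fun n => by have := hdiff n; linarith
  -- real analytic facts about φ
  have hq1 : (1:ℝ) ≤ (m:ℝ) * p := by
    have : (1:ℕ) ≤ m * p := Nat.mul_le_mul hm hp
    exact_mod_cast this
  set r : ℝ := Real.sqrt ((m * p : ℝ)^2 + 4) with hr
  have hr2 : r^2 = (m*p:ℝ)^2 + 4 := Real.sq_sqrt (by positivity)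
  have hrpos : 0 ≤ r := Real.sqrt_nonneg _
  have hrq : (m:ℝ)*p < r := by nlinarith
  have hφ1 : 1 < φ := by rw [hφ]; linarith
  have hφpos : 0 < φ := by linarith
  have hψpos : 0 < φ + (m:ℝ)*p := by linarith
  have hkey : φ * (φ + (m:ℝ)*p) = 2*φ + (m:ℝ)*p := by
    rw [hφ]; linear_combination hr2 / 4
  have hirr_r : Irrational r := by
    have hns := aux_notsq (m*p) (Nat.mul_le_mul hm hp)
    have h1 : Irrational (Real.sqrt (((m*p)^2 + 4 : ℕ) : ℝ)) :=
      irrational_sqrt_natCast_iff.mpr hns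
    have heq : (((m*p)^2 + 4 : ℕ) : ℝ) = (m*p:ℝ)^2 + 4 := by push_cast; ring
    rwa [heq] at h1
  have hirr_φ : Irrational φ := by
    have h1 : Irrational (((2 - (m*p : ℤ)) : ℤ) + r) := hirr_r.intCast_add _
    have h2 : Irrational ((((2 - (m*p : ℤ)) : ℤ) + r) / ((2:ℤ) : ℝ)) :=
      h1.div_intCast (by norm_num)
    have heq : φ = (((2 - (m*p : ℤ)) : ℤ) + r) / ((2:ℤ) : ℝ) := by
      rw [hφ]; push_cast; ring
    rwa [heq]
  have hirr_ψ : Irrational (φ + (m:ℝ)*p) := by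
    have h1 : Irrational (φ + ((m*p : ℕ) : ℝ)) := hirr_φ.add_natCast (m*p)
    have heq : ((m*p : ℕ) : ℝ) = (m:ℝ)*p := by push_cast; ring
    rwa [heq] at h1
  obtain ⟨hiffX, hstarX⟩ := aux_beatty m p φ hm hp hφpos hψpos hkey hirr_φ hirr_ψ
  have hub := aux_unbounded m p hm hp x y hx0 hxmono hcomp hdiff
  have hstarx := aux_star m p hm hp x y hx0 hxmono hcomp hdiff hub
  -- mem-iff for x
  have hfin : ∀ t : ℕ, {n : ℕ | x n ≤ (t:ℤ)}.Finite := by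
    intro t
    obtain ⟨N1, hN1⟩ := hub (t:ℤ)
    apply Set.Finite.subset (Set.finite_Iio N1)
    intro n hn
    simp only [Set.mem_setOf_eq] at hn
    simp only [Set.mem_Iio]
    by_contra hcon
    push_neg at hcon
    have := hxmono hcon
    omega
  have hiffx : ∀ t n : ℕ, x n ≤ (t:ℤ) ↔ n < {n : ℕ | x n ≤ (t:ℤ)}.ncard := by
    intro t n
    exact aux_mem_iff (hfin t)
      (fun a b hab hb => le_trans (hxmono hab) hb) n
  have hX0 : ∀ n : ℕ, (0:ℤ) ≤ ⌊(n:ℝ)*φ/p⌋ := fun n =>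
    Int.floor_nonneg.mpr (by positivity)
  -- main induction
  have hC : ∀ t : ℕ, {n : ℕ | x n ≤ (t:ℤ)}.ncard
      = {n : ℕ | ⌊(n:ℝ)*φ/p⌋ ≤ (t:ℤ)}.ncard := by
    intro t
    induction t using Nat.strong_induction_on with
    | _ t IH =>
      have hsets : {n : ℕ | 1 ≤ n ∧ x n + (m:ℤ)*n ≤ (t:ℤ)}
          = {n : ℕ | 1 ≤ n ∧ ⌊(n:ℝ)*φ/p⌋ + (m:ℤ)*n ≤ (t:ℤ)} := by
        ext n
        simp only [Set.mem_setOf_eq]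
        refine and_congr_right fun h1 => ?_
        rcases le_or_gt ((m:ℤ)*n) (t:ℤ) with hc | hc
        · have hmnn : m*n ≤ t := by exact_mod_cast hc
          have hmn1 : 1 ≤ m*n := Nat.mul_pos (by omega) (by omega)
          have ht'e : ((t - m*n : ℕ) : ℤ) = (t:ℤ) - (m:ℤ)*n := by push_cast; omega
          have ht'lt : t - m*n < t := by omega
          have l1 : (x n + (m:ℤ)*n ≤ (t:ℤ)) ↔ x n ≤ ((t - m*n : ℕ) : ℤ) := by omega
          have l2 : (⌊(n:ℝ)*φ/p⌋ + (m:ℤ)*n ≤ (t:ℤ))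
              ↔ ⌊(n:ℝ)*φ/p⌋ ≤ ((t - m*n : ℕ) : ℤ) := by omega
          rw [l1, l2, hiffx (t - m*n) n, hiffX (t - m*n) n, IH (t - m*n) ht'lt]
        · have h2 := hx0 n
          have h3 := hX0 n
          constructor
          · intro h; omega
          · intro h; omega
      have h1 := hstarx t
      have h2 := hstarX t
      rw [hsets] at h1
      omega
  have hkeyx : ∀ n : ℕ, x n = ⌊(n:ℝ)*φ/p⌋ := by
    intro n
    have h1 : ∀ t : ℕ, (x n ≤ (t:ℤ)) ↔ (⌊(n:ℝ)*φ/p⌋ ≤ (t:ℤ)) := fun t => by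
      rw [hiffx t n, hiffX t n, hC t]
    have hx := hx0 n
    have hX := hX0 n
    apply le_antisymm
    · have := (h1 (⌊(n:ℝ)*φ/p⌋).toNat).mpr (by omega)
      omega
    · have := (h1 (x n).toNat).mp (by omega)
      omega
  intro n
  refine ⟨hkeyx n, ?_⟩
  have hfl : ⌊(n:ℝ)*φ/p⌋ + (m:ℤ)*n = ⌊(n:ℝ)*(φ + (m:ℝ)*p)/p⌋ := by
    rw [show (n:ℝ)*(φ + (m:ℝ)*p)/p = (n:ℝ)*φ/p + (((m:ℤ)*n : ℤ) : ℝ) by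
      push_cast; field_simp]
    rw [Int.floor_add_intCast]
  rw [hyx n, hkeyx n, hfl]
end

section
/- Fix a positive integer m, and let a_n = ⌊n·φ_m⌋ and b_n = ⌊n·(φ_m + m)⌋ where φ_m = (2 - m + √(m²+4))/2. Then for every positive integer n, a_{b_n - n} = b_n - 1. -/
lemma notSquare_aux (m : ℕ) (hm : 1 ≤ m) : ¬ IsSquare (m^2 + 4) := by
  rintro ⟨r, hr⟩
  have h1 : m < r := by nlinarith
  have h2 : r < m + 2 := by nlinarith
  have : r = m + 1 := by omega
  subst this
  have h3 : m^2 + 4 = m^2 + (2*m + 1) := by rw [hr]; ring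
  have h4 := Nat.add_left_cancel h3
  omega

theorem stmt_10 (m : ℕ) (hm : 1 ≤ m)
    (φ : ℝ) (hφ : φ = (2 - (m : ℝ) + Real.sqrt ((m : ℝ)^2 + 4)) / 2)
    (a b : ℕ → ℤ)
    (ha : ∀ n : ℕ, a n = ⌊(n : ℝ) * φ⌋)
    (hb : ∀ n : ℕ, b n = ⌊(n : ℝ) * (φ + m)⌋) :
    ∀ n : ℕ, 1 ≤ n → a ((b n - n).toNat) = b n - 1 := by
  set s : ℝ := Real.sqrt ((m : ℝ)^2 + 4) with hs
  have hm1 : (1 : ℝ) ≤ (m : ℝ) := by exact_mod_cast hm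
  have hs2 : s^2 = (m : ℝ)^2 + 4 := Real.sq_sqrt (by positivity)
  have hs0 : 0 ≤ s := Real.sqrt_nonneg _
  have hsgt : (m : ℝ) < s := by nlinarith
  have hslt : s < (m : ℝ) + 2 := by nlinarith
  have hφ1 : 1 < φ := by rw [hφ]; nlinarith
  have hφ2 : φ < 2 := by rw [hφ]; nlinarith
  have hkey : (φ - 1) * (φ + m - 1) = 1 := by rw [hφ]; ring_nf; nlinarith
  -- irrationality
  have hirr_s : Irrational s := by
    have : ((m:ℝ)^2 + 4) = ((m^2 + 4 : ℕ) : ℝ) := by push_cast; ring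
    rw [hs, this, irrational_sqrt_natCast_iff]
    exact notSquare_aux m hm
  have hirr : Irrational φ := by
    rw [hφ]
    have h1 : Irrational (2 - (m:ℝ) + s) := by
      have := hirr_s.ratCast_add ((2 : ℚ) - (m : ℚ))
      convert this using 2
      push_cast; ring
    have h2 := h1.div_intCast (m := 2) (by norm_num)
    simpa using h2
  intro n hn
  have hn1 : (1 : ℝ) ≤ (n : ℝ) := by exact_mod_cast hn
  set x : ℝ := (n : ℝ) * (φ + m - 1) with hx
  set k : ℤ := ⌊x⌋ with hk
  have hxirr : Irrational x := by
    have hφm1 : Irrational (φ + m - 1) := by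
      have := (hirr.add_intCast (m : ℤ)).sub_intCast 1
      simpa using this
    have := hφm1.natCast_mul (m := n) (by omega)
    simpa [hx] using this
  have hklt : (k : ℝ) < x := lt_of_le_of_ne (Int.floor_le x) (by
    intro h; exact hxirr ⟨(k : ℚ), by push_cast; exact h⟩)
  have hxlt : x < (k : ℝ) + 1 := Int.lt_floor_add_one x
  -- b n = k + n
  have hbn : b n = k + n := by
    rw [hb n]
    have : (n : ℝ) * (φ + m) = x + n := by rw [hx]; ring
    rw [this, Int.floor_add_natCast, hk]
  have hφm : (1 : ℝ) ≤ φ + m - 1 := by nlinarith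
  have hk1 : 1 ≤ k := by
    have : (1 : ℝ) ≤ x := by
      rw [hx]; nlinarith
    exact_mod_cast Int.le_floor.mpr (by exact_mod_cast this)
  rw [ha, hbn]
  have hsimp : k + (n:ℤ) - (n:ℤ) = k := by ring
  rw [hsimp]
  have hcast : ((k.toNat : ℕ) : ℝ) = (k : ℝ) := by
    exact_mod_cast Int.toNat_of_nonneg (by omega)
  rw [hcast]
  -- now show ⌊k * φ⌋ = k + n - 1
  have hφ1' : 0 < φ - 1 := by linarith
  have hupper : (k : ℝ) * φ < (k : ℝ) + n := by
    have : (k : ℝ) * (φ - 1) < x * (φ - 1) := by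
      apply mul_lt_mul_of_pos_right hklt hφ1'
    have hx2 : x * (φ - 1) = (n : ℝ) := by
      rw [hx]
      calc (n : ℝ) * (φ + m - 1) * (φ - 1) = (n : ℝ) * ((φ - 1) * (φ + m - 1)) := by ring
        _ = (n : ℝ) := by rw [hkey]; ring
    nlinarith
  have hlower : (k : ℝ) + n - 1 ≤ (k : ℝ) * φ := by
    have : x * (φ - 1) < ((k : ℝ) + 1) * (φ - 1) := by
      apply mul_lt_mul_of_pos_right hxlt hφ1'
    have hx2 : x * (φ - 1) = (n : ℝ) := by
      rw [hx]
      calc (n : ℝ) * (φ + m - 1) * (φ - 1) = (n : ℝ) * ((φ - 1) * (φ + m - 1)) := by ring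
        _ = (n : ℝ) := by rw [hkey]; ring
    nlinarith
  have : ⌊(k : ℝ) * φ⌋ = k + n - 1 := by
    apply Int.floor_eq_iff.mpr
    constructor
    · push_cast; linarith
    · push_cast; linarith
  rw [this]
end

section
/- Let a_n = ⌊n·φ⌋ and b_n = ⌊n·φ²⌋ where φ = (1+√5)/2 is the golden ratio. Then for every positive integer n, a_{a_n} = b_n - 1 (Kimberling's complementary equation for the Wythoff sequences). -/
theorem stmt_11 (φ : ℝ) (hφ : φ = (1 + Real.sqrt 5) / 2)
    (a b : ℕ → ℤ)
    (ha : ∀ n : ℕ, a n = ⌊(n : ℝ) * φ⌋)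
    (hb : ∀ n : ℕ, b n = ⌊(n : ℝ) * φ^2⌋) :
    ∀ n : ℕ, 1 ≤ n → a ((a n).toNat) = b n - 1 := by
  have h5 : Real.sqrt 5 ^ 2 = 5 := Real.sq_sqrt (by norm_num)
  have h5pos : (1:ℝ) < Real.sqrt 5 := by
    nlinarith [Real.sqrt_nonneg 5]
  have hφ2 : φ ^ 2 = φ + 1 := by rw [hφ]; nlinarith
  have hφ1 : 1 < φ := by rw [hφ]; nlinarith
  have hφlt : φ < 2 := by rw [hφ]; nlinarith
  have hirr : Irrational φ := by
    rw [hφ]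
    have h : Irrational (Real.sqrt 5) := (by norm_num : Nat.Prime 5).irrational_sqrt
    have : Irrational (1 + Real.sqrt 5) := by simpa using h.ratCast_add 1
    simpa [div_eq_mul_inv] using this.div_natCast (by norm_num : (2:ℕ) ≠ 0)
  intro n hn
  have hnirr : Irrational ((n : ℝ) * φ) := hirr.natCast_mul (by omega)
  set m : ℤ := ⌊(n : ℝ) * φ⌋ with hm
  set f : ℝ := (n : ℝ) * φ - m with hf
  have hf0 : 0 ≤ f := by
    have := Int.floor_le ((n : ℝ) * φ)
    simp [hf]; linarith
  have hfne : f ≠ 0 := by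
    intro h
    apply hnirr.ne_int m
    rw [hf] at h; linarith
  have hfpos : 0 < f := lt_of_le_of_ne hf0 (Ne.symm hfne)
  have hf1 : f < 1 := by
    have := Int.lt_floor_add_one ((n : ℝ) * φ)
    rw [hf]; linarith
  have hmval : ((n : ℝ)) * φ = m + f := by rw [hf]; ring
  -- a n = m, toNat
  have ham : a n = m := ha n
  have hm1 : 1 ≤ m := by
    rw [hm]
    have : (1:ℝ) ≤ (n:ℝ) * φ := by
      have : (1:ℝ) ≤ (n:ℝ) := by exact_mod_cast hn
      nlinarith
    exact_mod_cast Int.le_floor.mpr (by exact_mod_cast this)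
  have htn : ((a n).toNat : ℝ) = (m : ℝ) := by
    rw [ham]
    exact_mod_cast Int.toNat_of_nonneg (by omega)
  -- key floor computation
  have hkey : ⌊(m : ℝ) * φ⌋ = m + n - 1 := by
    apply Int.floor_eq_iff.mpr
    constructor
    · push_cast
      nlinarith [hmval]
    · push_cast
      nlinarith [hmval]
  have hbn : b n = m + n := by
    rw [hb n, hφ2, mul_add, mul_one, hmval]
    rw [show (m:ℝ) + f + (n:ℝ) = ((m:ℝ) + (n:ℝ)) + f by ring]
    rw [show ((m:ℝ) + (n:ℝ)) = ((m + n : ℤ) : ℝ) by push_cast; ring]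
    rw [add_comm, Int.floor_add_intCast, Int.floor_eq_zero_iff.mpr ⟨hf0, hf1⟩, zero_add]
  rw [ha ((a n).toNat), htn, hkey, hbn]
end

section
/- Let p ≥ 2 be an integer, and let 0 < α < β be irrational reals with 1/α + 1/β = p. Fix an integer l with 0 ≤ l < p, and define x_i = ⌊α·i⌋ (i ≥ 0) and y_i = ⌊β·i⌋ (i ≥ 1). Then the two sequences (x_{pi+l})_{i≥0} and (y_{pi-l})_{i≥1} are complementary on ℕ₀: every nonnegative integer occurs exactly once in total among them. -/
set_option maxHeartbeats 1000000 in
theorem stmt_12 (p : ℕ) (hp : 2 ≤ p) (α β : ℝ) (hα : 0 < α) (hlt : α < β)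
    (hαirr : Irrational α) (hβirr : Irrational β)
    (hsum : 1/α + 1/β = p) (l : ℕ) (hl : l < p)
    (x y : ℕ → ℤ)
    (hx : ∀ i : ℕ, x i = ⌊α * i⌋)
    (hy : ∀ i : ℕ, y i = ⌊β * i⌋) :
    ∀ k : ℕ,
      Set.ncard {i : ℕ | x (p * i + l) = (k : ℤ)} +
      Set.ncard {i : ℕ | 1 ≤ i ∧ y (p * i - l) = (k : ℤ)} = 1 := by
  intro k
  have hβ0 : 0 < β := hα.trans hlt
  have hp0 : (0:ℝ) < p := by
    have : (0:ℕ) < p := by omega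
    exact_mod_cast this
  have hP : (0:ℝ) < (p:ℝ) * α := by positivity
  have hQ : (0:ℝ) < (p:ℝ) * β := by positivity
  set A : ℝ := ((p:ℝ) * α)⁻¹ with hA_def
  set B : ℝ := ((p:ℝ) * β)⁻¹ with hB_def
  set c : ℝ := (l:ℝ) / p with hc_def
  have hA0 : 0 < A := by positivity
  have hB0 : 0 < B := by positivity
  have hαp : 1 < (p:ℝ) * α := by
    have h1 : 1/α < p := by
      have : 0 < 1/β := by positivity
      linarith
    rwa [div_lt_iff₀ hα] at h1
  have hβp : 1 < (p:ℝ) * β := by nlinarith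
  have hA1 : A < 1 := by
    rw [hA_def, inv_lt_one_iff₀]; right; exact hαp
  have hB1 : B < 1 := by
    rw [hB_def, inv_lt_one_iff₀]; right; exact hβp
  have hAB : A + B = 1 := by
    have hinv : α⁻¹ + β⁻¹ = (p:ℝ) := by
      rw [← one_div, ← one_div]; exact hsum
    rw [hA_def, hB_def, mul_inv, mul_inv, ← mul_add, hinv,
      inv_mul_cancel₀ (ne_of_gt hp0)]
  have hc0 : 0 ≤ c := by positivity
  have hc1 : c < 1 := by
    rw [hc_def, div_lt_one hp0]
    exact_mod_cast hl
  -- A is irrational (as "not equal to any rational")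
  have hAirr : ∀ q : ℚ, (q:ℝ) ≠ A := by
    intro q hq
    have hq0 : (q:ℝ) ≠ 0 := by rw [hq]; exact ne_of_gt hA0
    have hq0' : q ≠ 0 := by exact_mod_cast hq0
    apply hαirr
    refine ⟨((p:ℚ) * q)⁻¹, ?_⟩
    push_cast
    rw [hq, hA_def]
    field_simp
  -- non-integrality of A*n - c for n ≠ 0
  have hnotint : ∀ n : ℕ, n ≠ 0 → ∀ m : ℤ, (m:ℝ) ≠ A * n - c := by
    intro n hn m hm
    apply hAirr (((m:ℚ) + (l:ℚ)/(p:ℚ)) / (n:ℚ))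
    have hn' : (n:ℝ) ≠ 0 := by
      have : (0:ℕ) < n := Nat.pos_of_ne_zero hn
      positivity
    push_cast
    rw [hm, hc_def]
    field_simp
    try ring
  -- characterizations
  have hcP : (p:ℝ) * α * c = α * l := by
    rw [hc_def]; field_simp
  have hcQ : (p:ℝ) * β * c = β * l := by
    rw [hc_def]; field_simp
  have hxkey : ∀ r s : ℝ, (A * r - c ≤ s ↔ r ≤ α * ((p:ℝ) * s + l)) := by
    intro r s
    rw [hA_def, sub_le_iff_le_add, inv_mul_le_iff₀ hP]
    constructor <;> intro h <;> nlinarith [hcP]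
  have hxkey' : ∀ r s : ℝ, (s < A * r - c ↔ α * ((p:ℝ) * s + l) < r) := by
    intro r s
    rw [hA_def, lt_sub_iff_add_lt, lt_inv_mul_iff₀ hP]
    constructor <;> intro h <;> nlinarith [hcP]
  have hykey : ∀ r s : ℝ, (B * r + c ≤ s ↔ r ≤ β * ((p:ℝ) * s - l)) := by
    intro r s
    rw [hB_def, ← le_sub_iff_add_le, inv_mul_le_iff₀ hQ]
    constructor <;> intro h <;> nlinarith [hcQ]
  have hykey' : ∀ r s : ℝ, (s < B * r + c ↔ β * ((p:ℝ) * s - l) < r) := by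
    intro r s
    rw [hB_def, ← sub_lt_iff_lt_add, lt_inv_mul_iff₀ hQ]
    constructor <;> intro h <;> nlinarith [hcQ]
  have hxchar : ∀ i : ℕ, (x (p * i + l) = (k:ℤ) ↔
      (A * k - c ≤ (i:ℝ) ∧ (i:ℝ) < A * (k+1) - c)) := by
    intro i
    rw [hx, Int.floor_eq_iff]
    have hcast : ((p * i + l : ℕ) : ℝ) = (p:ℝ) * i + l := by push_cast; ring
    rw [hcast]
    constructor
    · rintro ⟨h1, h2⟩
      refine ⟨(hxkey _ _).mpr ?_, (hxkey' _ _).mpr ?_⟩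
      · exact_mod_cast h1
      · push_cast at h2 ⊢; linarith
    · rintro ⟨h1, h2⟩
      have h1' := (hxkey _ _).mp h1
      have h2' := (hxkey' _ _).mp h2
      constructor
      · exact_mod_cast h1'
      · push_cast; linarith
  have hychar : ∀ i : ℕ, 1 ≤ i → (y (p * i - l) = (k:ℤ) ↔
      (B * k + c ≤ (i:ℝ) ∧ (i:ℝ) < B * (k+1) + c)) := by
    intro i hi
    rw [hy, Int.floor_eq_iff]
    have hle : l ≤ p * i := le_trans (le_of_lt hl) (Nat.le_mul_of_pos_right p hi)
    have hcast : ((p * i - l : ℕ) : ℝ) = (p:ℝ) * i - l := by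
      push_cast [hle]; ring
    rw [hcast]
    constructor
    · rintro ⟨h1, h2⟩
      refine ⟨(hykey _ _).mpr ?_, (hykey' _ _).mpr ?_⟩
      · exact_mod_cast h1
      · push_cast at h2 ⊢; linarith
    · rintro ⟨h1, h2⟩
      have h1' := (hykey _ _).mp h1
      have h2' := (hykey' _ _).mp h2
      constructor
      · exact_mod_cast h1'
      · push_cast; linarith
  -- the two sets
  set S1 : Set ℕ := {i : ℕ | x (p * i + l) = (k : ℤ)} with hS1_def
  set S2 : Set ℕ := {i : ℕ | 1 ≤ i ∧ y (p * i - l) = (k : ℤ)} with hS2_def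
  have hS1sub : S1.Subsingleton := by
    intro i hi j hj
    rw [hS1_def, Set.mem_setOf_eq, hxchar] at hi hj
    have h1 : (i:ℝ) < (j:ℝ) + 1 := by nlinarith [hi.1, hi.2, hj.1, hj.2]
    have h2 : (j:ℝ) < (i:ℝ) + 1 := by nlinarith [hi.1, hi.2, hj.1, hj.2]
    have h1' : i < j + 1 := by exact_mod_cast h1
    have h2' : j < i + 1 := by exact_mod_cast h2
    omega
  have hS2sub : S2.Subsingleton := by
    intro i hi j hj
    rw [hS2_def, Set.mem_setOf_eq] at hi hj
    rw [hychar i hi.1] at hi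
    rw [hychar j hj.1] at hj
    · have h1 : (i:ℝ) < (j:ℝ) + 1 := by nlinarith [hi.2.1, hi.2.2, hj.2.1, hj.2.2]
      have h2 : (j:ℝ) < (i:ℝ) + 1 := by nlinarith [hi.2.1, hi.2.2, hj.2.1, hj.2.2]
      have h1' : i < j + 1 := by exact_mod_cast h1
      have h2' : j < i + 1 := by exact_mod_cast h2
      omega
  -- exactly one is nonempty
  have hmain : (S1.Nonempty ∧ S2 = ∅) ∨ (S1 = ∅ ∧ S2.Nonempty) := by
    by_cases h00 : k = 0 ∧ l = 0
    · left
      obtain ⟨hk0, hl0⟩ := h00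
      constructor
      · refine ⟨0, ?_⟩
        rw [hS1_def, Set.mem_setOf_eq, hx]
        subst hk0 hl0
        norm_num
      · ext i
        simp only [hS2_def, Set.mem_setOf_eq, Set.mem_empty_iff_false, iff_false, not_and]
        intro hi1
        rw [hychar i hi1]
        rintro ⟨h1, h2⟩
        subst hk0 hl0
        simp only [hc_def, Nat.cast_zero, zero_div, mul_zero, zero_add, add_zero, mul_one] at h1 h2
        have : (1:ℝ) ≤ i := by exact_mod_cast hi1
        linarith
    · -- general case
      set u : ℝ := A * k - c with hu_def
      set u' : ℝ := B * k + c with hu'_def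
      set v : ℝ := A * (k+1) - c with hv_def
      set v' : ℝ := B * (k+1) + c with hv'_def
      have huu' : u + u' = k := by rw [hu_def, hu'_def]; nlinarith [hAB]
      have hvv' : v + v' = (k:ℝ) + 1 := by rw [hv_def, hv'_def]; nlinarith [hAB]
      have hu_ni : ∀ m : ℤ, (m:ℝ) ≠ u := by
        by_cases hk : k = 0
        · have hl0 : l ≠ 0 := fun h => h00 ⟨hk, h⟩
          intro m hm
          subst hk
          rw [hu_def] at hm
          simp only [Nat.cast_zero, mul_zero, zero_sub] at hm
          have hcpos : 0 < c := by
            rw [hc_def]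
            have : (0:ℕ) < l := Nat.pos_of_ne_zero hl0
            have : (0:ℝ) < l := by exact_mod_cast this
            positivity
          rcases le_or_gt 0 m with h | h
          · have : (0:ℝ) ≤ m := by exact_mod_cast h
            linarith
          · have : m ≤ -1 := by omega
            have : (m:ℝ) ≤ -1 := by exact_mod_cast this
            linarith
        · intro m; exact hnotint k hk m
      have hv_ni : ∀ m : ℤ, (m:ℝ) ≠ v := by
        intro m hm
        have : (m:ℝ) = A * ((k+1 : ℕ):ℝ) - c := by rw [hm, hv_def]; push_cast; ring
        exact hnotint (k+1) (Nat.succ_ne_zero k) m this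
      have hu'_ni : ∀ m : ℤ, (m:ℝ) ≠ u' := by
        intro m hm
        apply hu_ni ((k:ℤ) - m)
        push_cast
        linarith
      -- least integer candidates
      obtain ⟨i, hi_def⟩ : ∃ i : ℤ, i = ⌊u⌋ + 1 := ⟨_, rfl⟩
      obtain ⟨j, hj_def⟩ : ∃ j : ℤ, j = (k:ℤ) + 1 - i := ⟨_, rfl⟩
      have hu_lt_i : u < (i:ℝ) := by
        rw [hi_def]; push_cast; exact Int.lt_floor_add_one u
      have hfl : ((⌊u⌋:ℤ):ℝ) < u := lt_of_le_of_ne (Int.floor_le u) (hu_ni ⌊u⌋)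
      have hu'_lt_j : u' < (j:ℝ) := by
        rw [hj_def]; push_cast
        rw [hi_def]; push_cast
        linarith
      have hj_lt : (j:ℝ) - 1 < u' := by
        rw [hj_def]; push_cast
        linarith
      have hij : (i:ℝ) + (j:ℝ) = (k:ℝ) + 1 := by
        rw [hj_def]; push_cast; ring
      -- least-integer properties
      have hS1least : ∀ m : ℕ, m ∈ S1 → (i:ℝ) ≤ (m:ℝ) ∧ (m:ℝ) < v := by
        intro m hm
        rw [hS1_def, Set.mem_setOf_eq, hxchar] at hm
        obtain ⟨h1, h2⟩ := hm
        refine ⟨?_, h2⟩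
        have hne : ((m:ℕ):ℝ) ≠ u := by exact_mod_cast hu_ni (m:ℤ)
        have : u < (m:ℝ) := lt_of_le_of_ne h1 hne.symm
        have h3 : ((⌊u⌋:ℤ):ℝ) < (m:ℝ) := lt_trans hfl this
        have h4 : ⌊u⌋ < (m:ℤ) := by exact_mod_cast h3
        have h5 : i ≤ (m:ℤ) := by omega
        exact_mod_cast h5
      have hS2least : ∀ m : ℕ, m ∈ S2 → (j:ℝ) ≤ (m:ℝ) ∧ (m:ℝ) < v' := by
        intro m hm
        rw [hS2_def, Set.mem_setOf_eq] at hm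
        obtain ⟨hm1, hm2⟩ := hm
        rw [hychar m hm1] at hm2
        obtain ⟨h1, h2⟩ := hm2
        refine ⟨?_, h2⟩
        have hne : ((m:ℕ):ℝ) ≠ u' := by exact_mod_cast hu'_ni (m:ℤ)
        have h3 : u' < (m:ℝ) := lt_of_le_of_ne h1 hne.symm
        have h4 : (j:ℝ) - 1 < (m:ℝ) := lt_trans hj_lt h3
        have h5 : j - 1 < (m:ℤ) := by exact_mod_cast h4
        have h6 : j ≤ (m:ℤ) := by omega
        exact_mod_cast h6
      have hvi : (i:ℝ) ≠ v := fun h => hv_ni i h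
      rcases lt_or_gt_of_ne hvi with hcase | hcase
      · -- i < v : S1 nonempty, S2 empty
        left
        have hi0 : 0 ≤ i := by
          have hum : (-1:ℝ) ≤ u := by
            rw [hu_def]
            have : (0:ℝ) ≤ A * k := by positivity
            linarith
          have hfl1 : (-1:ℤ) ≤ ⌊u⌋ := Int.le_floor.mpr (by push_cast; linarith)
          omega
        constructor
        · refine ⟨i.toNat, ?_⟩
          rw [hS1_def, Set.mem_setOf_eq, hxchar]
          have hcast : ((i.toNat : ℕ) : ℝ) = (i:ℝ) := by
            exact_mod_cast congrArg (fun z : ℤ => (z:ℝ)) (Int.toNat_of_nonneg hi0)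
          rw [hcast]
          exact ⟨le_of_lt hu_lt_i, hcase⟩
        · ext m
          simp only [Set.mem_empty_iff_false, iff_false]
          intro hm
          obtain ⟨h1, h2⟩ := hS2least m hm
          have : (j:ℝ) > v' := by linarith [hij, hvv']
          linarith
      · -- v < i : S1 empty, S2 nonempty
        right
        constructor
        · ext m
          simp only [Set.mem_empty_iff_false, iff_false]
          intro hm
          obtain ⟨h1, h2⟩ := hS1least m hm
          linarith
        · have hj1 : 1 ≤ j := by
            have hu'pos : 0 < u' := by
              by_cases hk : k = 0
              · have hl0 : l ≠ 0 := fun h => h00 ⟨hk, h⟩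
                rw [hu'_def, hk]
                have : (0:ℕ) < l := Nat.pos_of_ne_zero hl0
                have : (0:ℝ) < l := by exact_mod_cast this
                have : 0 < c := by rw [hc_def]; positivity
                simp only [Nat.cast_zero, mul_zero, zero_add]
                linarith
              · rw [hu'_def]
                have : (1:ℝ) ≤ k := by
                  have : 1 ≤ k := Nat.pos_of_ne_zero hk
                  exact_mod_cast this
                nlinarith
            have : (0:ℝ) < (j:ℝ) := lt_trans hu'pos hu'_lt_j
            have : 0 < j := by exact_mod_cast this
            omega
          refine ⟨j.toNat, ?_⟩
          rw [hS2_def, Set.mem_setOf_eq]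
          have hjnat : 1 ≤ j.toNat := by omega
          have hcast : ((j.toNat : ℕ) : ℝ) = (j:ℝ) := by
            exact_mod_cast congrArg (fun z : ℤ => (z:ℝ)) (Int.toNat_of_nonneg (by omega : (0:ℤ) ≤ j))
          refine ⟨hjnat, ?_⟩
          rw [hychar _ hjnat, hcast]
          refine ⟨le_of_lt hu'_lt_j, ?_⟩
          have : (j:ℝ) < v' := by linarith [hij, hvv']
          exact this
  -- conclude
  rcases hmain with ⟨⟨a, ha⟩, he⟩ | ⟨he, ⟨a, ha⟩⟩
  · rw [hS1sub.eq_singleton_of_mem ha, he, Set.ncard_singleton, Set.ncard_empty]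
  · rw [hS2sub.eq_singleton_of_mem ha, he, Set.ncard_singleton, Set.ncard_empty]
end

section
/- (Fraenkel's Appendix, Theorem 1) Let p be a positive integer and α, β positive irrationals with α ≤ β and 1/α + 1/β = p. Let M = ⌊1/α⌋ + 1 and N = ⌊1/β⌋ + 1. Then the multisets S = {⌊nα⌋ : n ≥ M} and T = {⌊nβ⌋ : n ≥ N} are p-fold complementary on the positive integers: every positive integer k satisfies #{n ≥ M : ⌊nα⌋ = k} + #{n ≥ N : ⌊nβ⌋ = k} = p. -/
lemma count_aux (γ : ℝ) (hγ : 0 < γ) (hirr : Irrational γ) (M : ℕ)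
    (hM : (M : ℤ) = ⌊1/γ⌋ + 1) (k : ℕ) (hk : 1 ≤ k) :
    {n : ℕ | M ≤ n ∧ ⌊(n : ℝ) * γ⌋ = (k : ℤ)} =
      ↑(Finset.Ioc (⌊(k : ℝ)/γ⌋.toNat) (⌊((k : ℝ)+1)/γ⌋.toNat)) := by
  have hkγ : Irrational ((k : ℝ)/γ) := hirr.natCast_div (by omega)
  have hk1γ : Irrational (((k : ℝ)+1)/γ) := by
    have := hirr.natCast_div (m := k+1) (by omega)
    push_cast at this ⊢
    exact this
  have ha0 : (0 : ℤ) ≤ ⌊(k : ℝ)/γ⌋ := by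
    apply Int.floor_nonneg.mpr
    positivity
  have hb0 : (0 : ℤ) ≤ ⌊((k : ℝ)+1)/γ⌋ := by
    apply Int.floor_nonneg.mpr
    positivity
  ext n
  simp only [Set.mem_setOf_eq, Finset.coe_Ioc, Set.mem_Ioc]
  constructor
  · rintro ⟨hMn, hfl⟩
    have hn0 : n ≠ 0 := by
      rintro rfl
      simp at hfl
      omega
    have hnγ : Irrational ((n : ℝ) * γ) := hirr.natCast_mul hn0
    have h1 : (k : ℝ) ≤ n * γ := by
      have := Int.floor_le ((n : ℝ) * γ); rw [hfl] at this; exact_mod_cast this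
    have h1' : (k : ℝ) < n * γ := lt_of_le_of_ne h1 (fun h => hnγ.ne_nat k h.symm)
    have h2 : (n : ℝ) * γ < (k : ℝ) + 1 := by
      have := Int.lt_floor_add_one ((n : ℝ) * γ); rw [hfl] at this; push_cast at this
      exact this
    have hlo : (k : ℝ)/γ < n := (div_lt_iff₀ hγ).mpr (by linarith)
    have hhi : (n : ℝ) < ((k : ℝ)+1)/γ := (lt_div_iff₀ hγ).mpr (by linarith)
    have hlo' : ⌊(k : ℝ)/γ⌋ < (n : ℤ) := Int.floor_lt.mpr (by exact_mod_cast hlo)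
    have hhi' : (n : ℤ) ≤ ⌊((k : ℝ)+1)/γ⌋ := Int.le_floor.mpr (le_of_lt (by exact_mod_cast hhi))
    omega
  · rintro ⟨hlo, hhi⟩
    have hlo' : ⌊(k : ℝ)/γ⌋ < (n : ℤ) := by omega
    have hhi' : (n : ℤ) ≤ ⌊((k : ℝ)+1)/γ⌋ := by omega
    have hlo2 : (k : ℝ)/γ < n := by
      have : (⌊(k : ℝ)/γ⌋ : ℝ) + 1 ≤ (n : ℤ) := by exact_mod_cast hlo'
      have h2 := Int.lt_floor_add_one ((k : ℝ)/γ)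
      push_cast at this
      linarith
    have hhi2 : (n : ℝ) < ((k : ℝ)+1)/γ := by
      have h2 : ((n : ℤ) : ℝ) ≤ ((k : ℝ)+1)/γ := Int.le_floor.mp hhi'
      push_cast at h2
      exact lt_of_le_of_ne h2 (fun h => hk1γ ⟨(n : ℚ), by push_cast; exact h⟩)
    have h1 : (k : ℝ) < n * γ := (div_lt_iff₀ hγ).mp hlo2
    have h2 : (n : ℝ) * γ < (k : ℝ) + 1 := (lt_div_iff₀ hγ).mp hhi2
    refine ⟨?_, ?_⟩
    · -- M ≤ n
      have hone' : (1 : ℝ)/γ < n := by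
        calc (1 : ℝ)/γ ≤ (k : ℝ)/γ := by
              gcongr
              exact_mod_cast hk
          _ < n := hlo2
      have : ⌊(1 : ℝ)/γ⌋ < (n : ℤ) := Int.floor_lt.mpr (by exact_mod_cast hone')
      omega
    · have : ((k : ℤ) : ℝ) ≤ (n : ℝ) * γ := by push_cast; linarith
      have h3 : (n : ℝ) * γ < (k : ℤ) + 1 := by push_cast; linarith
      exact Int.floor_eq_iff.mpr ⟨this, h3⟩

lemma floor_sum (x y : ℝ) (hx : Irrational x) (m : ℤ) (hxy : x + y = m) :
    ⌊x⌋ + ⌊y⌋ = m - 1 := by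
  have hy : Irrational y := by
    have h : y = m - x := by linarith
    rw [h]
    exact hx.intCast_sub m
  have h1 : (⌊x⌋ : ℝ) < x := lt_of_le_of_ne (Int.floor_le x) (fun h => hx.ne_int _ h.symm)
  have h2 : (⌊y⌋ : ℝ) < y := lt_of_le_of_ne (Int.floor_le y) (fun h => hy.ne_int _ h.symm)
  have h3 : x - 1 < (⌊x⌋ : ℝ) := Int.sub_one_lt_floor x
  have h4 : y - 1 < (⌊y⌋ : ℝ) := Int.sub_one_lt_floor y
  have h5 : ((⌊x⌋ + ⌊y⌋ : ℤ) : ℝ) < (m : ℝ) := by push_cast; linarith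
  have h6 : ((m : ℝ)) - 2 < ((⌊x⌋ + ⌊y⌋ : ℤ) : ℝ) := by push_cast; linarith
  have h5' : ⌊x⌋ + ⌊y⌋ < m := by exact_mod_cast h5
  have h6' : m - 2 < ⌊x⌋ + ⌊y⌋ := by exact_mod_cast (by push_cast at h6 ⊢; linarith : ((m - 2 : ℤ) : ℝ) < ((⌊x⌋ + ⌊y⌋ : ℤ) : ℝ))
  omega

theorem stmt_15 (p : ℕ) (hp : 1 ≤ p) (α β : ℝ) (hα : 0 < α) (hβ : 0 < β)
    (hαirr : Irrational α) (hβirr : Irrational β) (hle : α ≤ β)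
    (hsum : 1/α + 1/β = p)
    (M N : ℕ) (hM : (M : ℤ) = ⌊1/α⌋ + 1) (hN : (N : ℤ) = ⌊1/β⌋ + 1) :
    ∀ k : ℕ, 1 ≤ k →
      Set.ncard {n : ℕ | M ≤ n ∧ ⌊(n : ℝ) * α⌋ = (k : ℤ)} +
      Set.ncard {n : ℕ | N ≤ n ∧ ⌊(n : ℝ) * β⌋ = (k : ℤ)} = p := by
  intro k hk
  rw [count_aux α hα hαirr M hM k hk, count_aux β hβ hβirr N hN k hk,
    Set.ncard_coe_finset, Set.ncard_coe_finset, Nat.card_Ioc, Nat.card_Ioc]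
  set Aa := ⌊(k : ℝ)/α⌋ with hAa
  set Ab := ⌊((k : ℝ)+1)/α⌋ with hAb
  set Ba := ⌊(k : ℝ)/β⌋ with hBa
  set Bb := ⌊((k : ℝ)+1)/β⌋ with hBb
  have hα0 : α ≠ 0 := ne_of_gt hα
  have hβ0 : β ≠ 0 := ne_of_gt hβ
  have e1 : Aa + Ba = (k : ℤ) * p - 1 := by
    apply floor_sum _ _ (hαirr.natCast_div (by omega)) ((k : ℤ) * p)
    push_cast
    field_simp
    field_simp at hsum
    nlinarith [hsum]
  have e2 : Ab + Bb = ((k : ℤ) + 1) * p - 1 := by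
    apply floor_sum _ _ ?_ (((k : ℤ) + 1) * p)
    · push_cast
      field_simp
      field_simp at hsum
      nlinarith [hsum]
    · have := hαirr.natCast_div (m := k + 1) (by omega)
      push_cast at this ⊢
      exact this
  have m1 : Aa ≤ Ab := Int.floor_le_floor (by gcongr; linarith)
  have m2 : Ba ≤ Bb := Int.floor_le_floor (by gcongr; linarith)
  have n1 : (0 : ℤ) ≤ Aa := Int.floor_nonneg.mpr (by positivity)
  have n2 : (0 : ℤ) ≤ Ba := Int.floor_nonneg.mpr (by positivity)
  have e3 : Ab + Bb = Aa + Ba + p := by linear_combination e2 - e1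
  omega
end
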